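/- For all y < 0 and b ∈ [0,1], |G(y,b) − (−b·y)| ≤ e^{−y²/2}/y², where G(y,b) = φ(y) + y·Φ(y) − b·y. -/

import Mathlib

open MeasureTheory ProbabilityTheory

/-- Standard normal density. -/
noncomputable def stdPdf (x : ℝ) : ℝ := Real.exp (-(x ^ 2) / 2) / Real.sqrt (2 * Real.pi)

/-- Standard normal CDF. -/
noncomputable def stdCdf (x : ℝ) : ℝ := ∫ t in Set.Iic x, stdPdf t

/-- Standard normal quantile function. -/
noncomputable def stdQuantile (p : ℝ) : ℝ := Function.invFun stdCdf p

/-- The function `G(w, β) = φ(w) + w Φ(w) - β w`. -/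
noncomputable def G (w β : ℝ) : ℝ := stdPdf w + w * stdCdf w - β * w

lemma sqrt_two_pi_pos : (0:ℝ) < Real.sqrt (2 * Real.pi) :=
  Real.sqrt_pos.2 (by positivity)

lemma one_le_sqrt_two_pi : (1:ℝ) ≤ Real.sqrt (2 * Real.pi) := by
  rw [show (1:ℝ) = Real.sqrt 1 by simp]
  apply Real.sqrt_le_sqrt
  nlinarith [Real.pi_gt_three]

lemma stdPdf_pos (x : ℝ) : 0 < stdPdf x := by
  unfold stdPdf; positivity

lemma stdPdf_continuous : Continuous stdPdf := by
  unfold stdPdf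
  exact (Real.continuous_exp.comp (by continuity)).div_const _

lemma stdPdf_hasDerivAt (x : ℝ) : HasDerivAt stdPdf (-x * stdPdf x) x := by
  have h1 : HasDerivAt (fun x : ℝ => -(x ^ 2) / 2) (-x) x := by
    have := (hasDerivAt_pow 2 x).neg.div_const 2
    exact this.congr_deriv (by norm_num; ring)
  have h2 := (h1.exp).div_const (Real.sqrt (2 * Real.pi))
  refine h2.congr_deriv ?_
  unfold stdPdf; ring

lemma integrable_stdPdf : Integrable stdPdf := by
  have h := (integrable_exp_neg_mul_sq (by norm_num : (0:ℝ) < 1/2)).div_const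
    (Real.sqrt (2 * Real.pi))
  refine h.congr (Filter.Eventually.of_forall fun x => ?_)
  unfold stdPdf; ring_nf

lemma abs_mul_stdPdf_le (t : ℝ) :
    |t * stdPdf t| ≤ Real.exp (-(1/4) * t ^ 2) / Real.sqrt (2 * Real.pi) := by
  have h1 : |t| ≤ Real.exp (t ^ 2 / 4) := by
    calc |t| ≤ 1 + t ^ 2 / 4 := by nlinarith [abs_nonneg t, sq_abs t, sq_nonneg (|t| - 2)]
    _ ≤ Real.exp (t ^ 2 / 4) := by linarith [Real.add_one_le_exp (t ^ 2 / 4)]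
  have h2 : |t * stdPdf t| = |t| * stdPdf t := by
    rw [abs_mul, abs_of_pos (stdPdf_pos t)]
  rw [h2]
  have h3 : |t| * stdPdf t ≤ Real.exp (t ^ 2 / 4) * stdPdf t :=
    mul_le_mul_of_nonneg_right h1 (stdPdf_pos t).le
  refine h3.trans (le_of_eq ?_)
  unfold stdPdf
  rw [← mul_div_assoc, ← Real.exp_add]
  norm_num
  ring_nf

lemma integrable_mul_stdPdf : Integrable (fun t => t * stdPdf t) := by
  have hg : Integrable (fun t : ℝ => Real.exp (-(1/4) * t ^ 2) / Real.sqrt (2 * Real.pi)) :=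
    (integrable_exp_neg_mul_sq (by norm_num : (0:ℝ) < 1/4)).div_const _
  refine hg.mono' ?_ ?_
  · exact (continuous_id.mul stdPdf_continuous).aestronglyMeasurable
  · exact Filter.Eventually.of_forall fun t => by
      rw [Real.norm_eq_abs]; exact abs_mul_stdPdf_le t

lemma tendsto_stdPdf_atBot : Filter.Tendsto stdPdf Filter.atBot (nhds 0) := by
  have hsq : Filter.Tendsto (fun t : ℝ => t ^ 2) Filter.atBot Filter.atTop := by
    have := (Filter.tendsto_pow_atTop (α := ℝ) (n := 2) two_ne_zero).comp
      Filter.tendsto_neg_atBot_atTop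
    refine this.congr fun x => by simp [Function.comp]
  have h1 : Filter.Tendsto (fun t : ℝ => -(t ^ 2) / 2) Filter.atBot Filter.atBot :=
    Filter.Tendsto.atBot_div_const (by norm_num)
      (Filter.tendsto_neg_atTop_atBot.comp hsq)
  have h2 := (Real.tendsto_exp_atBot.comp h1).div_const (Real.sqrt (2 * Real.pi))
  rw [zero_div] at h2
  exact h2.congr fun x => rfl

/-- `∫_{-∞}^y t φ(t) dt = -φ(y)` -/
lemma integral_mul_stdPdf (y : ℝ) :
    ∫ t in Set.Iic y, t * stdPdf t = -stdPdf y := by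
  have h := MeasureTheory.integral_Iic_of_hasDerivAt_of_tendsto'
    (f := fun t => -stdPdf t) (f' := fun t => t * stdPdf t) (a := y) (m := 0)
    (fun x _ => by have := (stdPdf_hasDerivAt x).neg; simp only [neg_mul, neg_neg] at this; exact this)
    (integrable_mul_stdPdf.integrableOn)
    (by simpa using tendsto_stdPdf_atBot.neg)
  simpa using h

/-- Mills upper: `Φ(y) ≤ φ(y)/(-y)` for `y < 0`. -/
lemma mills_upper {y : ℝ} (hy : y < 0) : stdCdf y ≤ stdPdf y / (-y) := by
  have key : stdCdf y ≤ ∫ t in Set.Iic y, (t * stdPdf t) / y := by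
    unfold stdCdf
    apply MeasureTheory.setIntegral_mono_on integrable_stdPdf.integrableOn
      ((integrable_mul_stdPdf.div_const y).integrableOn) measurableSet_Iic
    intro t ht
    have ht' : t ≤ y := ht
    have h1 : 1 ≤ t / y := by
      rw [le_div_iff_of_neg hy]; simpa using ht'
    have h2 := mul_le_mul_of_nonneg_right h1 (stdPdf_pos t).le
    calc stdPdf t = 1 * stdPdf t := by ring
    _ ≤ (t / y) * stdPdf t := h2
    _ = t * stdPdf t / y := by ring
  rw [MeasureTheory.integral_div, integral_mul_stdPdf] at key
  calc stdCdf y ≤ -stdPdf y / y := key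
  _ = stdPdf y / (-y) := by ring

noncomputable def millsF (t : ℝ) : ℝ := -(t * stdPdf t) / (t ^ 2 + 1)

noncomputable def millsF' (t : ℝ) : ℝ :=
  stdPdf t * (t ^ 4 + 2 * t ^ 2 - 1) / (t ^ 2 + 1) ^ 2

lemma millsF_hasDerivAt (t : ℝ) : HasDerivAt millsF (millsF' t) t := by
  have hden : (t ^ 2 + 1 : ℝ) ≠ 0 := by positivity
  have h1 : HasDerivAt (fun t : ℝ => -(t * stdPdf t))
      (-(1 * stdPdf t + t * (-t * stdPdf t))) t :=
    ((hasDerivAt_id t).mul (stdPdf_hasDerivAt t)).neg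
  have h2 : HasDerivAt (fun t : ℝ => t ^ 2 + 1) (2 * t) t := by
    simpa using (hasDerivAt_pow 2 t).add_const 1
  have h3 := h1.div h2 hden
  refine h3.congr_deriv ?_
  unfold millsF'
  field_simp
  ring

lemma abs_millsF'_le (t : ℝ) : |millsF' t| ≤ stdPdf t := by
  unfold millsF'
  rw [abs_div, abs_mul, abs_of_pos (stdPdf_pos t), abs_of_pos (by positivity : (0:ℝ) < (t^2+1)^2)]
  rw [div_le_iff₀ (by positivity : (0:ℝ) < (t^2+1)^2)]
  have h1 : |t ^ 4 + 2 * t ^ 2 - 1| ≤ (t ^ 2 + 1) ^ 2 := by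
    rw [abs_le]; constructor <;> nlinarith [sq_nonneg t, sq_nonneg (t^2)]
  nlinarith [stdPdf_pos t, abs_nonneg (t ^ 4 + 2 * t ^ 2 - 1)]

lemma millsF'_le (t : ℝ) : millsF' t ≤ stdPdf t :=
  (le_abs_self _).trans (abs_millsF'_le t)

lemma millsF'_continuous : Continuous millsF' := by
  unfold millsF'
  exact (stdPdf_continuous.mul (by continuity)).div (by continuity) (fun t => by positivity)

lemma integrable_millsF' : Integrable millsF' := by
  refine integrable_stdPdf.mono' millsF'_continuous.aestronglyMeasurable ?_
  exact Filter.Eventually.of_forall fun t => by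
    rw [Real.norm_eq_abs]; exact abs_millsF'_le t

lemma tendsto_millsF_atBot : Filter.Tendsto millsF Filter.atBot (nhds 0) := by
  apply squeeze_zero_norm _ tendsto_stdPdf_atBot
  intro t
  unfold millsF
  rw [Real.norm_eq_abs, abs_div, abs_neg, abs_mul, abs_of_pos (stdPdf_pos t),
    abs_of_pos (by positivity : (0:ℝ) < t^2+1)]
  rw [div_le_iff₀ (by positivity : (0:ℝ) < t^2+1)]
  nlinarith [stdPdf_pos t, sq_nonneg (|t| - 1), sq_abs t, abs_nonneg t]

lemma integral_millsF' (y : ℝ) : ∫ t in Set.Iic y, millsF' t = millsF y := by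
  have h := MeasureTheory.integral_Iic_of_hasDerivAt_of_tendsto'
    (f := millsF) (f' := millsF') (a := y) (m := 0)
    (fun x _ => millsF_hasDerivAt x)
    (integrable_millsF'.integrableOn)
    tendsto_millsF_atBot
  simpa using h

/-- Mills lower: `-y φ(y)/(y²+1) ≤ Φ(y)`. -/
lemma mills_lower (y : ℝ) : -(y * stdPdf y) / (y ^ 2 + 1) ≤ stdCdf y := by
  have h : millsF y ≤ stdCdf y := by
    rw [← integral_millsF']
    unfold stdCdf
    exact MeasureTheory.setIntegral_mono_on integrable_millsF'.integrableOn
      integrable_stdPdf.integrableOn measurableSet_Iic (fun t _ => millsF'_le t)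
  exact h

theorem stmt5 (y b : ℝ) (hy : y < 0) (hb : b ∈ Set.Icc (0 : ℝ) 1) :
    |G y b - (-(b * y))| ≤ Real.exp (-(y ^ 2) / 2) / y ^ 2 := by
  have hexpr : G y b - (-(b * y)) = stdPdf y + y * stdCdf y := by
    unfold G; ring
  rw [hexpr]
  have hupper := mills_upper hy
  have hlower := mills_lower y
  have hy2 : (0:ℝ) < y ^ 2 := by nlinarith
  have hd : (0:ℝ) < y ^ 2 + 1 := by positivity
  have hphi := stdPdf_pos y
  have hyne : y ≠ 0 := hy.ne
  -- lower bound: expression nonneg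
  have h1 : 0 ≤ stdPdf y + y * stdCdf y := by
    have h := mul_le_mul_of_nonpos_left hupper hy.le
    have heq : y * (stdPdf y / (-y)) = -stdPdf y := by
      field_simp [hyne]
    rw [heq] at h
    linarith
  -- upper bound
  have h2 : stdPdf y + y * stdCdf y ≤ stdPdf y / (y ^ 2 + 1) := by
    have h := mul_le_mul_of_nonpos_left hlower hy.le
    have heq : y * (-(y * stdPdf y) / (y ^ 2 + 1)) = -(y ^ 2 * stdPdf y) / (y ^ 2 + 1) := by
      ring
    rw [heq] at h
    have heq2 : stdPdf y / (y ^ 2 + 1) = stdPdf y + -(y ^ 2 * stdPdf y) / (y ^ 2 + 1) := by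
      field_simp [hd.ne']
      ring
    rw [heq2]
    linarith
  rw [abs_of_nonneg h1]
  calc stdPdf y + y * stdCdf y ≤ stdPdf y / (y ^ 2 + 1) := h2
  _ ≤ stdPdf y / y ^ 2 := by
      rw [div_le_div_iff₀ hd hy2]
      nlinarith
  _ ≤ Real.exp (-(y ^ 2) / 2) / y ^ 2 := by
      gcongr
      unfold stdPdf
      exact div_le_self (Real.exp_pos _).le one_le_sqrt_two_pi
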